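/- arXiv:2605.09117 — 4 statements merged into one kernel-verified Lean document; each statement's English description precedes it below -/
import Mathlib

section
/- Let (Y_n)_{n≥1} be i.i.d. random variables with values in [0,1] and let a := E[Y_1] > 0. Then the random series Z := 1 + Σ_{n≥1} Π_{j=1}^n (1 - Y_j) is almost surely finite and E[Z] = 1/a. -/
open MeasureTheory ProbabilityTheory
open scoped ENNReal

/-- If `(Y n)` are i.i.d. `[0,1]`-valued random variables with mean `a > 0`, then the
random series `Z = 1 + ∑ₙ ∏_{j=1}^n (1 - Y j)` is a.s. finite (summable) and `E[Z] = 1/a`. -/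
theorem vanilla_holding_time_unbiased
    {Ω : Type*} {mΩ : MeasurableSpace Ω} (μ : Measure Ω) [IsProbabilityMeasure μ]
    (Y : ℕ → Ω → ℝ) (hmeas : ∀ n, Measurable (Y n))
    (hindep : iIndepFun Y μ)
    (hident : ∀ n, IdentDistrib (Y n) (Y 0) μ μ)
    (hrange : ∀ n, ∀ᵐ ω ∂μ, Y n ω ∈ Set.Icc (0 : ℝ) 1)
    (a : ℝ) (ha : a = ∫ ω, Y 0 ω ∂μ) (hapos : 0 < a) :
    (∀ᵐ ω ∂μ, Summable (fun n : ℕ => ∏ j ∈ Finset.range (n + 1), (1 - Y j ω))) ∧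
      ∫ ω, (1 + ∑' n : ℕ, ∏ j ∈ Finset.range (n + 1), (1 - Y j ω)) ∂μ = 1 / a := by
  -- basic setup
  set g : ℕ → Ω → ℝ≥0∞ := fun j ω => ENNReal.ofReal (1 - Y j ω) with hg_def
  have hg_meas : ∀ j, Measurable (g j) := fun j =>
    ENNReal.measurable_ofReal.comp ((measurable_const.sub (hmeas j)))
  have hgindep : iIndepFun g μ := by
    have := hindep.comp (fun _ => fun y : ℝ => ENNReal.ofReal (1 - y))
      (fun _ => ENNReal.measurable_ofReal.comp (measurable_const.sub measurable_id))
    exact this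
  -- a ≤ 1
  have hY0int : Integrable (Y 0) μ := by
    refine ⟨(hmeas 0).aestronglyMeasurable, ?_⟩
    refine HasFiniteIntegral.of_bounded (C := 1) ?_
    filter_upwards [hrange 0] with ω hω
    rw [Real.norm_eq_abs, abs_le]; constructor <;> linarith [hω.1, hω.2]
  have ha1 : a ≤ 1 := by
    rw [ha]
    calc ∫ ω, Y 0 ω ∂μ ≤ ∫ _ω, (1 : ℝ) ∂μ := by
          refine integral_mono_ae hY0int (integrable_const 1) ?_
          filter_upwards [hrange 0] with ω hω using hω.2
      _ = 1 := by simp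
  have h1a0 : (0 : ℝ) ≤ 1 - a := by linarith
  -- each Y j integrable, ∫ (1 - Y j) = 1 - a
  have hYjint : ∀ j, Integrable (Y j) μ := fun j => ⟨(hmeas j).aestronglyMeasurable, by
    refine HasFiniteIntegral.of_bounded (C := 1) ?_
    filter_upwards [hrange j] with ω hω
    rw [Real.norm_eq_abs, abs_le]; constructor <;> linarith [hω.1, hω.2]⟩
  have hint1Y : ∀ j, ∫ ω, (1 - Y j ω) ∂μ = 1 - a := by
    intro j
    rw [integral_sub (integrable_const 1) (hYjint j), integral_const]
    simp [ha, (hident j).integral_eq]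
  -- lintegral of each g j
  have hlg : ∀ j, ∫⁻ ω, g j ω ∂μ = ENNReal.ofReal (1 - a) := by
    intro j
    rw [← hint1Y j]
    have hint : Integrable (fun ω => 1 - Y j ω) μ := (integrable_const 1).sub (hYjint j)
    rw [← ofReal_integral_eq_lintegral_ofReal hint]
    filter_upwards [hrange j] with ω hω
    simp only [Pi.zero_apply]; linarith [hω.2]
  set r : ℝ≥0∞ := ENNReal.ofReal (1 - a) with hr_def
  have hr_lt : r < 1 := by
    rw [hr_def, ← ENNReal.ofReal_one]
    exact ENNReal.ofReal_lt_ofReal_iff_of_nonneg h1a0 |>.mpr (by linarith)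
  -- lintegral of products via independence
  have hGmeas : ∀ n : ℕ, Measurable (fun ω => ∏ j ∈ Finset.range (n + 1), g j ω) := by
    intro n
    exact Finset.measurable_prod _ (fun j _ => hg_meas j)
  have hprod : ∀ n : ℕ, ∫⁻ ω, ∏ j ∈ Finset.range (n + 1), g j ω ∂μ = r ^ (n + 1) := by
    intro n
    induction n with
    | zero => simpa using hlg 0
    | succ n ih =>
      have hind : IndepFun (fun ω => ∏ j ∈ Finset.range (n + 1), g j ω) (g (n + 1)) μ := by
        have h := hgindep.indepFun_finsetProd_of_notMem hg_meas
          (s := Finset.range (n + 1)) (i := n + 1) (by simp)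
        rw [Finset.prod_fn] at h
        exact h
      calc ∫⁻ ω, ∏ j ∈ Finset.range (n + 1 + 1), g j ω ∂μ
          = ∫⁻ ω, (∏ j ∈ Finset.range (n + 1), g j ω) * g (n + 1) ω ∂μ := by
            simp [Finset.prod_range_succ]
        _ = (∫⁻ ω, ∏ j ∈ Finset.range (n + 1), g j ω ∂μ) * ∫⁻ ω, g (n + 1) ω ∂μ :=
            lintegral_mul_eq_lintegral_mul_lintegral_of_indepFun (hGmeas n) (hg_meas (n + 1)) hind
        _ = r ^ (n + 1) * r := by rw [ih, hlg (n + 1)]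
        _ = r ^ (n + 1 + 1) := by ring
  -- total lintegral of the tsum
  set T : Ω → ℝ≥0∞ := fun ω => ∑' n : ℕ, ∏ j ∈ Finset.range (n + 1), g j ω with hT_def
  have hTmeas : Measurable T := Measurable.ennreal_tsum hGmeas
  have hTlint : ∫⁻ ω, T ω ∂μ = r * (1 - r)⁻¹ := by
    rw [hT_def]
    rw [lintegral_tsum (fun n => (hGmeas n).aemeasurable)]
    simp_rw [hprod, pow_succ, mul_comm]
    rw [ENNReal.tsum_mul_left, ENNReal.tsum_geometric]
  have hTlint_ne_top : ∫⁻ ω, T ω ∂μ ≠ ∞ := by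
    rw [hTlint]
    exact ENNReal.mul_ne_top (by simp [hr_def]) (ENNReal.inv_ne_top.mpr
      (tsub_pos_of_lt hr_lt).ne')
  -- a.e. facts
  have hrange_all : ∀ᵐ ω ∂μ, ∀ n, Y n ω ∈ Set.Icc (0 : ℝ) 1 := ae_all_iff.mpr hrange
  have hTfin : ∀ᵐ ω ∂μ, T ω ≠ ∞ := ae_lt_top hTmeas hTlint_ne_top |>.mono fun ω h => h.ne
  -- a.e. products equal
  have hprodeq : ∀ᵐ ω ∂μ, ∀ n : ℕ,
      (∏ j ∈ Finset.range (n + 1), g j ω) = ENNReal.ofReal (∏ j ∈ Finset.range (n + 1), (1 - Y j ω)) := by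
    filter_upwards [hrange_all] with ω hω n
    rw [ENNReal.ofReal_prod_of_nonneg (fun j _ => by linarith [(hω j).2])]
  -- summability a.e.
  have hsummable : ∀ᵐ ω ∂μ, Summable (fun n : ℕ => ∏ j ∈ Finset.range (n + 1), (1 - Y j ω)) := by
    filter_upwards [hTfin, hprodeq, hrange_all] with ω hfin heq hω
    have h1 : Summable (fun n : ℕ => ((∏ j ∈ Finset.range (n + 1), g j ω)).toReal) :=
      ENNReal.summable_toReal (by rwa [hT_def] at hfin)
    refine h1.congr fun n => ?_
    rw [heq n, ENNReal.toReal_ofReal (Finset.prod_nonneg fun j _ => by linarith [(hω j).2])]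
  refine ⟨hsummable, ?_⟩
  -- the integral
  set Z : Ω → ℝ := fun ω => 1 + ∑' n : ℕ, ∏ j ∈ Finset.range (n + 1), (1 - Y j ω) with hZ_def
  have hZeq : ∀ᵐ ω ∂μ, ENNReal.ofReal (Z ω) = 1 + T ω := by
    filter_upwards [hsummable, hprodeq, hrange_all] with ω hsum heq hω
    have hnn : ∀ n : ℕ, (0:ℝ) ≤ ∏ j ∈ Finset.range (n + 1), (1 - Y j ω) :=
      fun n => Finset.prod_nonneg fun j _ => by linarith [(hω j).2]
    have htsum_nn : (0:ℝ) ≤ ∑' n : ℕ, ∏ j ∈ Finset.range (n + 1), (1 - Y j ω) :=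
      tsum_nonneg hnn
    rw [hZ_def]
    simp only
    rw [ENNReal.ofReal_add zero_le_one htsum_nn, ENNReal.ofReal_one,
      ENNReal.ofReal_tsum_of_nonneg hnn hsum, hT_def]
    simp_rw [← heq]
  have hZnn : ∀ᵐ ω ∂μ, 0 ≤ Z ω := by
    filter_upwards [hrange_all] with ω hω
    have : ∀ n : ℕ, (0:ℝ) ≤ ∏ j ∈ Finset.range (n + 1), (1 - Y j ω) :=
      fun n => Finset.prod_nonneg fun j _ => by linarith [(hω j).2]
    exact add_nonneg zero_le_one (tsum_nonneg this)
  have hZmeas : AEStronglyMeasurable Z μ := by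
    have hmeas' : Measurable fun ω => 1 + (T ω).toReal :=
      measurable_const.add hTmeas.ennreal_toReal
    refine (hmeas'.aestronglyMeasurable).congr ?_
    filter_upwards [hsummable, hprodeq, hrange_all, hTfin] with ω hsum heq hω hfin
    have : (T ω).toReal = ∑' n : ℕ, ∏ j ∈ Finset.range (n + 1), (1 - Y j ω) := by
      rw [hT_def]
      rw [ENNReal.tsum_toReal_eq (fun n => by rw [heq n]; exact ENNReal.ofReal_ne_top)]
      exact tsum_congr fun n => by
        rw [heq n, ENNReal.toReal_ofReal (Finset.prod_nonneg fun j _ => by linarith [(hω j).2])]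
    rw [this]
  have key : ∫ ω, Z ω ∂μ = (1 + r * (1 - r)⁻¹).toReal := by
    rw [integral_eq_lintegral_of_nonneg_ae hZnn hZmeas]
    congr 1
    rw [lintegral_congr_ae hZeq, lintegral_add_left measurable_const, hTlint]
    simp
  have hfinal : (1 + r * (1 - r)⁻¹).toReal = 1 / a := by
    have h1r : (1 : ℝ≥0∞) - r = ENNReal.ofReal a := by
      rw [hr_def, ← ENNReal.ofReal_one, ← ENNReal.ofReal_sub _ h1a0]
      norm_num
    rw [h1r, hr_def]
    rw [← ENNReal.ofReal_inv_of_pos hapos, ← ENNReal.ofReal_mul h1a0, ← ENNReal.ofReal_one,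
      ← ENNReal.ofReal_add zero_le_one (by positivity)]
    rw [ENNReal.toReal_ofReal (by positivity)]
    field_simp
    ring
  exact key.trans hfinal
end

section
/- Let (Y_n)_{n≥1} be i.i.d. random variables with values in [0,1], a := E[Y_1] ∈ (0,1], and r₂ := E[(1-Y_1)²] < 1. Define the first-success time T := inf{n ≥ 1 : U_n ≤ Y_n} where (U_n) are i.i.d. uniform on [0,1) independent of (Y_n) given the Y's, so that conditionally each trial n succeeds with probability Y_n. Then E[Π_{j=1}^{T-1}(1-Y_j)] = a/(1-r₂). -/
open MeasureTheory ProbabilityTheory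
open scoped ENNReal

private lemma aux_integral_prod_range {Ω : Type*} {mΩ : MeasurableSpace Ω} (μ : Measure Ω)
    [IsProbabilityMeasure μ] (f : ℕ → Ω → ℝ) (hm : ∀ i, Measurable (f i))
    (h : iIndepFun f μ) (n : ℕ) :
    ∫ ω, ∏ j ∈ Finset.range n, f j ω ∂μ = ∏ j ∈ Finset.range n, ∫ ω, f j ω ∂μ := by
  induction n with
  | zero => simp
  | succ n ih =>
    simp_rw [Finset.prod_range_succ]
    rw [← ih]
    have hind : IndepFun (∏ j ∈ Finset.range n, f j) (f n) μ := h.indepFun_prod_range_succ hm n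
    have h1 : AEStronglyMeasurable (∏ j ∈ Finset.range n, f j) μ := by
      have : Measurable (fun ω => ∏ j ∈ Finset.range n, f j ω) :=
        Finset.measurable_prod _ fun i _ => hm i
      have heq : (∏ j ∈ Finset.range n, f j) = fun ω => ∏ j ∈ Finset.range n, f j ω := by
        funext ω; simp
      rw [heq]; exact this.aestronglyMeasurable
    have h2 := hind.integral_mul_eq_mul_integral h1 (hm n).aestronglyMeasurable
    have h3 : ∫ ω, (∏ j ∈ Finset.range n, f j ω) * f n ω ∂μ
        = ∫ ω, ((∏ j ∈ Finset.range n, f j) * f n) ω ∂μ := by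
      refine integral_congr_ae (Filter.Eventually.of_forall fun ω => ?_)
      simp [Finset.prod_apply]
    rw [h3, h2]
    congr 1
    refine integral_congr_ae (Filter.Eventually.of_forall fun ω => ?_)
    simp [Finset.prod_apply]

private lemma aux_marginal {Ω : Type*} {mΩ : MeasurableSpace Ω} (μ : Measure Ω)
    [IsProbabilityMeasure μ] (Y U : Ω → ℝ) (hY : Measurable Y) (hU : Measurable U)
    (hYU : IndepFun Y U μ) (hUlaw : μ.map U = volume.restrict (Set.Ico (0 : ℝ) 1))
    (hrange : ∀ᵐ ω ∂μ, Y ω ∈ Set.Icc (0 : ℝ) 1)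
    (φ : ℝ × ℝ → ℝ) (hφ : Measurable φ)
    (hbound : ∀ p : ℝ × ℝ, p.1 ∈ Set.Icc (0 : ℝ) 1 → ‖φ p‖ ≤ 1)
    (g : ℝ → ℝ) (hg : Measurable g)
    (hinner : ∀ y ∈ Set.Icc (0 : ℝ) 1,
      ∫ u, φ (y, u) ∂(volume.restrict (Set.Ico (0 : ℝ) 1)) = g y) :
    ∫ ω, φ (Y ω, U ω) ∂μ = ∫ ω, g (Y ω) ∂μ := by
  set m : Measure ℝ := volume.restrict (Set.Ico (0 : ℝ) 1) with hm
  haveI : IsProbabilityMeasure m := ⟨by simp [hm, Real.volume_Ico]⟩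
  set ν : Measure ℝ := μ.map Y with hν
  haveI : IsProbabilityMeasure ν := Measure.isProbabilityMeasure_map hY.aemeasurable
  have hνrange : ∀ᵐ y ∂ν, y ∈ Set.Icc (0 : ℝ) 1 :=
    (ae_map_iff hY.aemeasurable measurableSet_Icc).2 hrange
  have hmap : μ.map (fun ω => (Y ω, U ω)) = ν.prod m := by
    rw [hν, ← hUlaw]
    exact (indepFun_iff_map_prod_eq_prod_map_map hY.aemeasurable hU.aemeasurable).1 hYU
  have hae : ∀ᵐ p ∂(ν.prod m), p.1 ∈ Set.Icc (0 : ℝ) 1 := by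
    rw [ae_iff]
    have hset : {p : ℝ × ℝ | ¬ p.1 ∈ Set.Icc (0 : ℝ) 1}
        = (Set.Icc (0 : ℝ) 1)ᶜ ×ˢ (Set.univ : Set ℝ) := by
      ext p; simp
    rw [hset, Measure.prod_prod]
    have h0 : ν (Set.Icc (0 : ℝ) 1)ᶜ = 0 := by
      have := hνrange
      rw [ae_iff] at this
      simpa [Set.compl_def] using this
    simp [h0]
  have hint : Integrable φ (ν.prod m) := by
    refine (integrable_const (1 : ℝ)).mono' hφ.aestronglyMeasurable ?_
    exact hae.mono fun p hp => hbound p hp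
  calc ∫ ω, φ (Y ω, U ω) ∂μ = ∫ p, φ p ∂(ν.prod m) := by
        rw [← hmap, integral_map ((hY.prodMk hU).aemeasurable) hφ.aestronglyMeasurable]
    _ = ∫ y, ∫ u, φ (y, u) ∂m ∂ν := integral_prod φ hint
    _ = ∫ y, g y ∂ν := integral_congr_ae (hνrange.mono fun y hy => hinner y hy)
    _ = ∫ ω, g (Y ω) ∂μ := integral_map hY.aemeasurable hg.aestronglyMeasurable

private lemma aux_inner_F {y : ℝ} (hy : y ∈ Set.Icc (0 : ℝ) 1) :
    ∫ u, (if u ≤ y then (1 : ℝ) else 0) ∂(volume.restrict (Set.Ico (0 : ℝ) 1)) = y := by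
  have heq : (fun u : ℝ => if u ≤ y then (1 : ℝ) else 0)
      = (Set.Iic y).indicator (fun _ => (1 : ℝ)) := by
    funext u; by_cases h : u ≤ y <;> simp [Set.indicator, Set.mem_Iic, h]
  rw [heq]
  rw [integral_indicator_const (1 : ℝ) measurableSet_Iic, smul_eq_mul, mul_one,
    measureReal_def, Measure.restrict_apply measurableSet_Iic]
  by_cases h1 : y < 1
  · have hs : Set.Iic y ∩ Set.Ico (0 : ℝ) 1 = Set.Icc 0 y := by
      ext u
      simp only [Set.mem_inter_iff, Set.mem_Iic, Set.mem_Ico, Set.mem_Icc]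
      exact ⟨fun ⟨h, h0, _⟩ => ⟨h0, h⟩, fun ⟨h0, h⟩ => ⟨h, h0, lt_of_le_of_lt h h1⟩⟩
    rw [hs, Real.volume_Icc]
    simp [hy.1]
  · have hy1 : y = 1 := le_antisymm hy.2 (not_lt.1 h1)
    have hs : Set.Iic y ∩ Set.Ico (0 : ℝ) 1 = Set.Ico (0 : ℝ) 1 := by
      apply Set.inter_eq_self_of_subset_right
      intro u hu
      exact le_of_lt (hy1 ▸ hu.2)
    rw [hs, Real.volume_Ico, hy1]
    norm_num

private lemma aux_inner_c {y : ℝ} (hy : y ∈ Set.Icc (0 : ℝ) 1) (c : ℝ) :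
    ∫ u, (if u ≤ y then (0 : ℝ) else c) ∂(volume.restrict (Set.Ico (0 : ℝ) 1))
      = (1 - y) * c := by
  have heq : (fun u : ℝ => if u ≤ y then (0 : ℝ) else c)
      = (Set.Ioi y).indicator (fun _ => c) := by
    funext u; by_cases h : u ≤ y
    · simp [Set.indicator, Set.mem_Ioi, h, not_lt.2 h]
    · simp [Set.indicator, Set.mem_Ioi, h, not_le.1 h]
  rw [heq, integral_indicator_const c measurableSet_Ioi, smul_eq_mul,
    measureReal_def, Measure.restrict_apply measurableSet_Ioi]
  have hs : Set.Ioi y ∩ Set.Ico (0 : ℝ) 1 = Set.Ioo y 1 := by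
    ext u
    simp only [Set.mem_inter_iff, Set.mem_Ioi, Set.mem_Ico, Set.mem_Ioo]
    exact ⟨fun ⟨h, _, h1⟩ => ⟨h, h1⟩, fun ⟨h, h1⟩ => ⟨h, le_of_lt (lt_of_le_of_lt hy.1 h), h1⟩⟩
  rw [hs, Real.volume_Ioo, ENNReal.toReal_ofReal (by linarith [hy.2])]

/-- Accept/reject model: i.i.d. acceptance probabilities `Y n ∈ [0,1]` with mean
`a ∈ (0,1]` and `r₂ = E[(1-Y₁)²] < 1`, i.i.d. uniforms `U n` on `[0,1)` independent of the
`Y`'s, and `T` the first success time (trial `n` succeeds iff `U n ≤ Y n`). Then the expected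
product of rejection probabilities before the success satisfies
`E[∏_{j=1}^{T-1} (1 - Y j)] = a / (1 - r₂)`. Here trials are indexed from `0`, so that the
product runs over `j < N` where `N` is the (0-based) index of the first success. -/
theorem expected_rejection_product_at_success
    {Ω : Type*} {mΩ : MeasurableSpace Ω} (μ : Measure Ω) [IsProbabilityMeasure μ]
    (Y U : ℕ → Ω → ℝ) (hYmeas : ∀ n, Measurable (Y n)) (hUmeas : ∀ n, Measurable (U n))
    (hindep : iIndepFun (fun n ω => (Y n ω, U n ω)) μ)
    (hident : ∀ n, IdentDistrib (fun ω => (Y n ω, U n ω)) (fun ω => (Y 0 ω, U 0 ω)) μ μ)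
    (hYU : ∀ n, IndepFun (Y n) (U n) μ)
    (hU : ∀ n, μ.map (U n) = volume.restrict (Set.Ico (0 : ℝ) 1))
    (hrange : ∀ n, ∀ᵐ ω ∂μ, Y n ω ∈ Set.Icc (0 : ℝ) 1)
    (a : ℝ) (ha : a = ∫ ω, Y 0 ω ∂μ) (ha0 : 0 < a) (ha1 : a ≤ 1)
    (r₂ : ℝ) (hr₂ : r₂ = ∫ ω, (1 - Y 0 ω) ^ 2 ∂μ) (hr₂1 : r₂ < 1) :
    ∫ ω, ∏ j ∈ Finset.range (sInf {n : ℕ | U n ω ≤ Y n ω}), (1 - Y j ω) ∂μ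
      = a / (1 - r₂) := by
  classical
  have hr₂0 : 0 ≤ r₂ := hr₂ ▸ integral_nonneg fun ω => sq_nonneg _
  -- the three basic composed functions
  set φF : ℝ × ℝ → ℝ := fun p => if p.2 ≤ p.1 then 1 else 0 with hφFdef
  set φG : ℝ × ℝ → ℝ := fun p => if p.2 ≤ p.1 then 0 else 1 - p.1 with hφGdef
  set φE : ℝ × ℝ → ℝ := fun p => if p.2 ≤ p.1 then 0 else 1 with hφEdef
  have hmle : MeasurableSet {p : ℝ × ℝ | p.2 ≤ p.1} :=
    measurableSet_le measurable_snd measurable_fst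
  have hφF : Measurable φF := Measurable.ite hmle measurable_const measurable_const
  have hφG : Measurable φG :=
    Measurable.ite hmle measurable_const (measurable_const.sub measurable_fst)
  have hφE : Measurable φE := Measurable.ite hmle measurable_const measurable_const
  -- expectation of each composed function, via identical distribution and the marginal lemma
  have hident' : ∀ (n : ℕ) (φ : ℝ × ℝ → ℝ), Measurable φ →
      ∫ ω, φ (Y n ω, U n ω) ∂μ = ∫ ω, φ (Y 0 ω, U 0 ω) ∂μ := by
    intro n φ hφ
    exact ((hident n).comp hφ).integral_eq
  have hIF : ∀ n, ∫ ω, φF (Y n ω, U n ω) ∂μ = a := by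
    intro n
    rw [hident' n φF hφF]
    rw [aux_marginal μ (Y 0) (U 0) (hYmeas 0) (hUmeas 0) (hYU 0) (hU 0) (hrange 0) φF hφF
      (fun p _ => by by_cases h : p.2 ≤ p.1 <;> simp [hφFdef, h])
      (fun y => y) measurable_id (fun y hy => aux_inner_F hy)]
    exact ha.symm
  have hIG : ∀ n, ∫ ω, φG (Y n ω, U n ω) ∂μ = r₂ := by
    intro n
    rw [hident' n φG hφG]
    rw [aux_marginal μ (Y 0) (U 0) (hYmeas 0) (hUmeas 0) (hYU 0) (hU 0) (hrange 0) φG hφG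
      (fun p hp => by
        by_cases h : p.2 ≤ p.1
        · simp [hφGdef, h]
        · simp only [hφGdef, if_neg h]
          rw [Real.norm_eq_abs, abs_le]
          constructor <;> [linarith [hp.2]; linarith [hp.1]])
      (fun y => (1 - y) ^ 2) ((measurable_const.sub measurable_id).pow_const 2)
      (fun y hy => by rw [aux_inner_c hy (1 - y)]; ring)]
    exact hr₂.symm
  have hYint : Integrable (Y 0) μ := by
    refine (integrable_const (1 : ℝ)).mono' (hYmeas 0).aestronglyMeasurable ?_
    exact (hrange 0).mono fun ω h => by
      rw [Real.norm_eq_abs, abs_le]; exact ⟨by linarith [h.1], h.2⟩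
  have hIE : ∀ n, ∫ ω, φE (Y n ω, U n ω) ∂μ = 1 - a := by
    intro n
    rw [hident' n φE hφE]
    rw [aux_marginal μ (Y 0) (U 0) (hYmeas 0) (hUmeas 0) (hYU 0) (hU 0) (hrange 0) φE hφE
      (fun p _ => by by_cases h : p.2 ≤ p.1 <;> simp [hφEdef, h])
      (fun y => 1 - y) (measurable_const.sub measurable_id)
      (fun y hy => by rw [aux_inner_c hy 1]; ring)]
    rw [integral_sub (integrable_const 1) hYint, integral_const]
    simp [ha]
  -- the summands
  set H : ℕ → Ω → ℝ := fun k ω =>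
    (∏ j ∈ Finset.range k, φG (Y j ω, U j ω)) * φF (Y k ω, U k ω) with hHdef
  have hHmeas : ∀ k, Measurable (H k) := by
    intro k
    exact (Finset.measurable_prod _ fun j _ =>
      hφG.comp ((hYmeas j).prodMk (hUmeas j))).mul
      (hφF.comp ((hYmeas k).prodMk (hUmeas k)))
  -- expectation of the summands
  have hHval : ∀ k, ∫ ω, H k ω ∂μ = r₂ ^ k * a := by
    intro k
    set fam : ℕ → Ω → ℝ := fun j ω => (if j < k then φG else φF) (Y j ω, U j ω) with hfamdef
    have hfm : ∀ j, Measurable (fam j) := by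
      intro j
      by_cases h : j < k <;> simp only [hfamdef, h, if_pos, if_neg, if_true, if_false]
      · exact hφG.comp ((hYmeas j).prodMk (hUmeas j))
      · exact hφF.comp ((hYmeas j).prodMk (hUmeas j))
    have hfindep : iIndepFun fam μ :=
      hindep.comp (fun j => if j < k then φG else φF)
        (fun j => by by_cases h : j < k <;> simp [h, hφG, hφF])
    have key := aux_integral_prod_range μ fam hfm hfindep (k + 1)
    have hL : ∫ ω, ∏ j ∈ Finset.range (k + 1), fam j ω ∂μ = ∫ ω, H k ω ∂μ := by
      refine integral_congr_ae (Filter.Eventually.of_forall fun ω => ?_)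
      show ∏ j ∈ Finset.range (k + 1), fam j ω = H k ω
      rw [Finset.prod_range_succ]
      congr 1
      · exact Finset.prod_congr rfl fun j hj => by
          simp [hfamdef, Finset.mem_range.1 hj]
      · simp [hfamdef]
    have hR : ∏ j ∈ Finset.range (k + 1), ∫ ω, fam j ω ∂μ = r₂ ^ k * a := by
      rw [Finset.prod_range_succ]
      congr 1
      · rw [Finset.prod_congr rfl fun j hj => ?_, Finset.prod_const,
          Finset.card_range]
        show ∫ ω, fam j ω ∂μ = r₂
        have hj' : j < k := Finset.mem_range.1 hj
        simp only [hfamdef, hj', if_true]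
        exact hIG j
      · simp only [hfamdef, lt_irrefl, if_false]
        exact hIF k
    rw [← hL, key, hR]
  -- nonnegativity and boundedness of the summands
  have hYae : ∀ᵐ ω ∂μ, ∀ j, Y j ω ∈ Set.Icc (0 : ℝ) 1 := ae_all_iff.2 hrange
  have hHnn : ∀ k, 0 ≤ᵐ[μ] H k := by
    intro k
    refine hYae.mono fun ω hω => ?_
    refine mul_nonneg (Finset.prod_nonneg fun j _ => ?_) ?_
    · by_cases h : U j ω ≤ Y j ω <;> simp [hφGdef, h]
      linarith [(hω j).2]
    · by_cases h : U k ω ≤ Y k ω <;> simp [hφFdef, h]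
  have hHle : ∀ k, ∀ᵐ ω ∂μ, ‖H k ω‖ ≤ 1 := by
    intro k
    refine hYae.mono fun ω hω => ?_
    have h1 : ∀ j, 0 ≤ φG (Y j ω, U j ω) ∧ φG (Y j ω, U j ω) ≤ 1 := by
      intro j
      by_cases h : U j ω ≤ Y j ω <;> simp [hφGdef, h]
      constructor <;> linarith [(hω j).1, (hω j).2]
    have h2 : 0 ≤ φF (Y k ω, U k ω) ∧ φF (Y k ω, U k ω) ≤ 1 := by
      by_cases h : U k ω ≤ Y k ω <;> simp [hφFdef, h]
    have h3 : (0:ℝ) ≤ (∏ j ∈ Finset.range k, φG (Y j ω, U j ω)) * φF (Y k ω, U k ω) :=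
      mul_nonneg (Finset.prod_nonneg fun j _ => (h1 j).1) h2.1
    have h4 : (∏ j ∈ Finset.range k, φG (Y j ω, U j ω)) * φF (Y k ω, U k ω) ≤ 1 := by
      calc (∏ j ∈ Finset.range k, φG (Y j ω, U j ω)) * φF (Y k ω, U k ω)
          ≤ 1 * 1 := by
            apply mul_le_mul
            · exact Finset.prod_le_one (fun j _ => (h1 j).1) (fun j _ => (h1 j).2)
            · exact h2.2
            · exact h2.1
            · exact zero_le_one
        _ = 1 := by ring
    rw [Real.norm_eq_abs, abs_le]
    exact ⟨by simpa [hHdef] using le_trans (by norm_num : (-1:ℝ) ≤ 0) h3, by simpa [hHdef] using h4⟩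
  have hHint : ∀ k, Integrable (H k) μ := by
    intro k
    exact (integrable_const (1 : ℝ)).mono' (hHmeas k).aestronglyMeasurable (hHle k)
  -- the success event has full measure
  set S : Set Ω := ⋃ n, {ω | U n ω ≤ Y n ω} with hSdef
  have hW : ∀ n : ℕ, (μ (⋂ j ∈ Finset.range n, {ω | U j ω ≤ Y j ω}ᶜ)).toReal
      = (1 - a) ^ n := by
    intro n
    set W : Set Ω := ⋂ j ∈ Finset.range n, {ω | U j ω ≤ Y j ω}ᶜ with hWdef
    have hWmeas : MeasurableSet W := by
      refine MeasurableSet.biInter (Finset.range n).countable_toSet fun j _ => ?_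
      exact (measurableSet_le (hUmeas j) (hYmeas j)).compl
    have hfindep : iIndepFun
        (fun j ω => φE (Y j ω, U j ω)) μ := hindep.comp (fun _ => φE) (fun _ => hφE)
    have key := aux_integral_prod_range μ (fun j ω => φE (Y j ω, U j ω))
      (fun j => hφE.comp ((hYmeas j).prodMk (hUmeas j))) hfindep n
    have hL : ∫ ω, ∏ j ∈ Finset.range n, φE (Y j ω, U j ω) ∂μ = (μ W).toReal := by
      have heq : (fun ω => ∏ j ∈ Finset.range n, φE (Y j ω, U j ω))
          = W.indicator 1 := by
        funext ω
        by_cases hω : ω ∈ W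
        · rw [Set.indicator_of_mem hω]
          rw [Finset.prod_eq_one fun j hj => ?_]
          · rfl
          · have := Set.mem_iInter₂.1 hω j hj
            simp only [Set.mem_compl_iff, Set.mem_setOf_eq] at this
            simp [hφEdef, this]
        · rw [Set.indicator_of_notMem hω]
          simp only [hWdef, Set.mem_iInter, not_forall] at hω
          obtain ⟨j, hj, hω'⟩ := hω
          simp only [Set.mem_compl_iff, Set.mem_setOf_eq, not_not] at hω'
          refine Finset.prod_eq_zero hj ?_
          simp [hφEdef, hω']
      rw [heq, integral_indicator_one hWmeas, measureReal_def]
    rw [← hL, key] at *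
    rw [Finset.prod_congr rfl fun j _ => hIE j, Finset.prod_const, Finset.card_range]
  have hScompl : μ Sᶜ = 0 := by
    have hsub : ∀ n : ℕ, Sᶜ ⊆ ⋂ j ∈ Finset.range n, {ω | U j ω ≤ Y j ω}ᶜ := by
      intro n ω hω
      refine Set.mem_iInter₂.2 fun j _ => ?_
      simp only [hSdef, Set.mem_compl_iff, Set.mem_iUnion, not_exists] at hω
      exact hω j
    have hle : ∀ n : ℕ, μ Sᶜ ≤ ENNReal.ofReal ((1 - a) ^ n) := by
      intro n
      have h1 : μ Sᶜ ≤ μ (⋂ j ∈ Finset.range n, {ω | U j ω ≤ Y j ω}ᶜ) :=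
        measure_mono (hsub n)
      have h2 : μ (⋂ j ∈ Finset.range n, {ω | U j ω ≤ Y j ω}ᶜ)
          = ENNReal.ofReal ((1 - a) ^ n) := by
        rw [← hW n, ENNReal.ofReal_toReal (measure_ne_top μ _)]
      rw [h2] at h1
      exact h1
    have htend : Filter.Tendsto (fun n => ENNReal.ofReal ((1 - a) ^ n))
        Filter.atTop (nhds 0) := by
      have h1 : Filter.Tendsto (fun n : ℕ => (1 - a) ^ n) Filter.atTop (nhds 0) :=
        tendsto_pow_atTop_nhds_zero_of_lt_one (by linarith) (by linarith)
      have := (ENNReal.continuous_ofReal.tendsto 0).comp h1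
      simpa [Function.comp_def] using this
    have := ge_of_tendsto htend (Filter.Eventually.of_forall hle)
    exact le_antisymm this zero_le
  -- a.e. identity
  have hae_eq : ∀ᵐ ω ∂μ,
      (∏ j ∈ Finset.range (sInf {n : ℕ | U n ω ≤ Y n ω}), (1 - Y j ω))
        = ∑' k, H k ω := by
    have hSfull : ∀ᵐ ω ∂μ, ω ∈ S := by
      rw [ae_iff]
      simpa [Set.compl_def] using hScompl
    refine hSfull.mono fun ω hω => ?_
    obtain ⟨n0, hn0⟩ := Set.mem_iUnion.1 hω
    set N := sInf {n : ℕ | U n ω ≤ Y n ω} with hNdef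
    have hne : {n : ℕ | U n ω ≤ Y n ω}.Nonempty := ⟨n0, hn0⟩
    have hNmem : U N ω ≤ Y N ω := Nat.sInf_mem hne
    have hNlt : ∀ j < N, ¬ (U j ω ≤ Y j ω) := fun j hj => Nat.notMem_of_lt_sInf hj
    have htsum : ∑' k, H k ω = H N ω := by
      refine tsum_eq_single N fun k hk => ?_
      rcases lt_or_gt_of_ne hk with h | h
      · -- k < N : the final factor vanishes
        have : φF (Y k ω, U k ω) = 0 := by simp [hφFdef, hNlt k h]
        simp [hHdef, this]
      · -- k > N : factor N of the product vanishes
        refine mul_eq_zero.2 (Or.inl (Finset.prod_eq_zero (Finset.mem_range.2 h) ?_))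
        simp [hφGdef, hNmem]
    rw [htsum]
    simp only [hHdef]
    have hF1 : φF (Y N ω, U N ω) = 1 := by simp [hφFdef, hNmem]
    rw [hF1, mul_one]
    refine (Finset.prod_congr rfl fun j hj => ?_).symm
    have hj' : ¬ (U j ω ≤ Y j ω) := hNlt j (Finset.mem_range.1 hj)
    simp [hφGdef, hj']
  -- lintegral of norms
  have hlint : ∀ k, ∫⁻ ω, (‖H k ω‖₊ : ℝ≥0∞) ∂μ = ENNReal.ofReal (r₂ ^ k * a) := by
    intro k
    have h1 : ∫⁻ ω, (‖H k ω‖₊ : ℝ≥0∞) ∂μ = ∫⁻ ω, ENNReal.ofReal (H k ω) ∂μ :=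
      lintegral_congr_ae ((hHnn k).mono fun ω hω => Real.enorm_eq_ofReal hω)
    rw [h1, ← ofReal_integral_eq_lintegral_ofReal (hHint k) (hHnn k), hHval k]
  have hsummable : Summable (fun k => r₂ ^ k * a) :=
    (summable_geometric_of_lt_one hr₂0 hr₂1).mul_right a
  have hne_top : (∑' k, ∫⁻ ω, (‖H k ω‖₊ : ℝ≥0∞) ∂μ) ≠ ⊤ := by
    simp_rw [hlint]
    rw [← ENNReal.ofReal_tsum_of_nonneg
      (fun k => mul_nonneg (pow_nonneg hr₂0 k) ha0.le) hsummable]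
    exact ENNReal.ofReal_ne_top
  -- conclusion
  rw [integral_congr_ae hae_eq,
    integral_tsum (fun k => (hHmeas k).aestronglyMeasurable) hne_top]
  simp_rw [hHval]
  rw [tsum_mul_right, tsum_geometric_of_lt_one hr₂0 hr₂1, inv_mul_eq_div]
end

section
/- In the setting of the previous statement (i.i.d. acceptance probabilities Y_n ∈ [0,1] with mean a ∈ (0,1] and r₂ = E[(1-Y_1)²] < 1, first-success time T), the expected bias of the truncated vanilla holding-time estimator equals (1-a)/(1-r₂); precisely, E[Π_{j=1}^{T-1}(1-Y_j)] · E[Σ_{n≥1} Π_{j=1}^n (1 - Ỹ_j)] = (1-a)/(1-r₂), where (Ỹ_n) is an independent i.i.d. copy of (Y_n). -/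
open MeasureTheory ProbabilityTheory
open scoped ENNReal

lemma aux_integral_prod {Ω β : Type*} {mΩ : MeasurableSpace Ω} {mβ : MeasurableSpace β}
    (μ : Measure Ω) [IsProbabilityMeasure μ] (X : ℕ → Ω → β) (hX : ∀ n, Measurable (X n))
    (hind : iIndepFun X μ) (φ : ℕ → β → ℝ) (hφ : ∀ n, Measurable (φ n))
    (hφ0 : ∀ n x, 0 ≤ φ n x) (m : ℕ) :
    ∫ ω, ∏ j ∈ Finset.range m, φ j (X j ω) ∂μ
      = ∏ j ∈ Finset.range m, ∫ ω, φ j (X j ω) ∂μ := by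
  induction m with
  | zero => simp
  | succ m ih =>
    have hF : iIndepFun (fun n ω => φ n (X n ω)) μ :=
      hind.comp φ hφ
    have hFmeas : ∀ n, Measurable (fun ω => φ n (X n ω)) := fun n => (hφ n).comp (hX n)
    have hPeq : (∏ j ∈ Finset.range m, fun ω => φ j (X j ω))
        = fun ω => ∏ j ∈ Finset.range m, φ j (X j ω) := by
      funext ω; simp [Finset.prod_apply]
    have hmul := (hF.indepFun_prod_range_succ hFmeas m).integral_mul_eq_mul_integral
      (by rw [hPeq]; exact (Finset.measurable_prod _ (fun j _ => hFmeas j)).aestronglyMeasurable)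
      (hFmeas m).aestronglyMeasurable
    rw [hPeq] at hmul
    have hmuleq : ((fun ω => ∏ j ∈ Finset.range m, φ j (X j ω)) * fun ω => φ m (X m ω))
        = fun ω => ∏ j ∈ Finset.range (m + 1), φ j (X j ω) := by
      funext ω; simp [Finset.prod_range_succ]
    rw [hmuleq] at hmul
    rw [show (∫ ω, ∏ j ∈ Finset.range (m+1), φ j (X j ω) ∂μ)
      = integral μ (fun ω => ∏ j ∈ Finset.range (m+1), φ j (X j ω)) from rfl, hmul,
      Finset.prod_range_succ, ih]
open MeasureTheory ProbabilityTheory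
open scoped ENNReal

lemma aux_pair_integral {Ω : Type*} {mΩ : MeasurableSpace Ω} (μ : Measure Ω)
    [IsProbabilityMeasure μ]
    (Y0 U0 : Ω → ℝ) (hY : Measurable Y0) (hU : Measurable U0) (hYU : IndepFun Y0 U0 μ)
    (hUmap : μ.map U0 = volume.restrict (Set.Ico (0:ℝ) 1))
    (hYrange : ∀ᵐ ω ∂μ, Y0 ω ∈ Set.Icc (0:ℝ) 1)
    (φ : ℝ × ℝ → ℝ) (hφ : Measurable φ) (hφ0 : ∀ p, 0 ≤ φ p) (hφ1 : ∀ p, φ p ≤ 1)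
    (g : ℝ → ℝ) (hg : Measurable g)
    (hinner : ∀ y ∈ Set.Icc (0:ℝ) 1, (∫ u in Set.Ico (0:ℝ) 1, φ (y, u)) = g y) :
    ∫ ω, φ (Y0 ω, U0 ω) ∂μ = ∫ ω, g (Y0 ω) ∂μ := by
  have hpair : Measurable (fun ω => (Y0 ω, U0 ω)) := hY.prodMk hU
  haveI h1 : IsProbabilityMeasure (μ.map Y0) := Measure.isProbabilityMeasure_map hY.aemeasurable
  haveI h2 : IsProbabilityMeasure (μ.map U0) := Measure.isProbabilityMeasure_map hU.aemeasurable
  have hmapeq : μ.map (fun ω => (Y0 ω, U0 ω)) = (μ.map Y0).prod (μ.map U0) :=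
    (indepFun_iff_map_prod_eq_prod_map_map hY.aemeasurable hU.aemeasurable).mp hYU
  have hint : Integrable φ ((μ.map Y0).prod (μ.map U0)) := by
    refine (integrable_const (1:ℝ)).mono' hφ.aestronglyMeasurable ?_
    filter_upwards with p
    rw [Real.norm_eq_abs, abs_of_nonneg (hφ0 p)]; exact hφ1 p
  calc ∫ ω, φ (Y0 ω, U0 ω) ∂μ
      = ∫ p, φ p ∂(μ.map (fun ω => (Y0 ω, U0 ω))) :=
        (integral_map hpair.aemeasurable hφ.aestronglyMeasurable).symm
    _ = ∫ p, φ p ∂((μ.map Y0).prod (μ.map U0)) := by rw [hmapeq]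
    _ = ∫ y, ∫ u, φ (y, u) ∂(μ.map U0) ∂(μ.map Y0) := integral_prod φ hint
    _ = ∫ y, g y ∂(μ.map Y0) := by
        refine integral_congr_ae ?_
        have hae : ∀ᵐ y ∂(μ.map Y0), y ∈ Set.Icc (0:ℝ) 1 :=
          (ae_map_iff hY.aemeasurable measurableSet_Icc).2 hYrange
        filter_upwards [hae] with y hy
        rw [hUmap]; exact hinner y hy
    _ = ∫ ω, g (Y0 ω) ∂μ := integral_map hY.aemeasurable hg.aestronglyMeasurable

noncomputable def hfun (p : ℝ × ℝ) : ℝ := if p.2 ≤ p.1 then 0 else max 0 (min 1 (1 - p.1))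
noncomputable def kfun (p : ℝ × ℝ) : ℝ := if p.2 ≤ p.1 then 1 else 0

lemma hfun_meas : Measurable hfun := by
  unfold hfun
  exact Measurable.ite (measurableSet_le measurable_snd measurable_fst) measurable_const
    (by fun_prop)

lemma kfun_meas : Measurable kfun := by
  unfold kfun
  exact Measurable.ite (measurableSet_le measurable_snd measurable_fst) measurable_const
    measurable_const

lemma hfun_nonneg (p : ℝ × ℝ) : 0 ≤ hfun p := by
  unfold hfun; split <;> simp

lemma hfun_le_one (p : ℝ × ℝ) : hfun p ≤ 1 := by
  unfold hfun; split
  · norm_num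
  · exact max_le (by norm_num) (min_le_left _ _)

lemma kfun_nonneg (p : ℝ × ℝ) : 0 ≤ kfun p := by unfold kfun; split <;> norm_num
lemma kfun_le_one (p : ℝ × ℝ) : kfun p ≤ 1 := by unfold kfun; split <;> norm_num

lemma vol_Ioi_inter (y : ℝ) (hy0 : 0 ≤ y) (hy1 : y ≤ 1) :
    volume (Set.Ioi y ∩ Set.Ico (0:ℝ) 1) = ENNReal.ofReal (1 - y) := by
  apply le_antisymm
  · calc volume (Set.Ioi y ∩ Set.Ico (0:ℝ) 1) ≤ volume (Set.Icc y 1) := by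
          apply measure_mono
          rintro u ⟨hu1, hu2, hu3⟩
          exact ⟨le_of_lt hu1, le_of_lt hu3⟩
      _ = ENNReal.ofReal (1 - y) := Real.volume_Icc
  · calc ENNReal.ofReal (1 - y) = volume (Set.Ioo y 1) := Real.volume_Ioo.symm
      _ ≤ volume (Set.Ioi y ∩ Set.Ico (0:ℝ) 1) := by
          apply measure_mono
          rintro u ⟨hu1, hu2⟩
          exact ⟨hu1, le_trans hy0 (le_of_lt hu1), hu2⟩

lemma vol_Iic_inter (y : ℝ) (hy0 : 0 ≤ y) (hy1 : y ≤ 1) :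
    volume (Set.Iic y ∩ Set.Ico (0:ℝ) 1) = ENNReal.ofReal y := by
  apply le_antisymm
  · calc volume (Set.Iic y ∩ Set.Ico (0:ℝ) 1) ≤ volume (Set.Icc 0 y) := by
          apply measure_mono
          rintro u ⟨hu1, hu2, hu3⟩
          exact ⟨hu2, hu1⟩
      _ = ENNReal.ofReal (y - 0) := Real.volume_Icc
      _ = ENNReal.ofReal y := by norm_num
  · calc ENNReal.ofReal y = ENNReal.ofReal (y - 0) := by norm_num
      _ = volume (Set.Ico 0 y) := Real.volume_Ico.symm
      _ ≤ volume (Set.Iic y ∩ Set.Ico (0:ℝ) 1) := by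
          apply measure_mono
          rintro u ⟨hu1, hu2⟩
          exact ⟨le_of_lt hu2, hu1, lt_of_lt_of_le hu2 hy1⟩

lemma inner_h (y : ℝ) (hy : y ∈ Set.Icc (0:ℝ) 1) :
    (∫ u in Set.Ico (0:ℝ) 1, hfun (y, u)) = (1 - y)^2 := by
  obtain ⟨hy0, hy1⟩ := hy
  have hcl : max 0 (min 1 (1 - y)) = 1 - y := by
    rw [min_eq_right (by linarith), max_eq_right (by linarith)]
  have heq : (fun u => hfun (y, u)) = (Set.Ioi y).indicator (fun _ => 1 - y) := by
    funext u
    simp only [hfun, hcl, Set.indicator, Set.mem_Ioi]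
    by_cases hu : u ≤ y
    · simp [hu, not_lt.mpr hu]
    · simp [hu, lt_of_not_ge hu]
  rw [show (∫ u in Set.Ico (0:ℝ) 1, hfun (y, u))
    = ∫ u in Set.Ico (0:ℝ) 1, (Set.Ioi y).indicator (fun _ => 1 - y) u from by rw [← heq],
    integral_indicator_const _ measurableSet_Ioi, measureReal_def, Measure.restrict_apply measurableSet_Ioi,
    vol_Ioi_inter y hy0 hy1, ENNReal.toReal_ofReal (by linarith), smul_eq_mul]
  ring

lemma inner_k (y : ℝ) (hy : y ∈ Set.Icc (0:ℝ) 1) :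
    (∫ u in Set.Ico (0:ℝ) 1, kfun (y, u)) = y := by
  obtain ⟨hy0, hy1⟩ := hy
  have heq : (fun u => kfun (y, u)) = (Set.Iic y).indicator (fun _ => (1:ℝ)) := by
    funext u
    by_cases hu : u ≤ y <;> simp [kfun, Set.indicator, hu]
  rw [show (∫ u in Set.Ico (0:ℝ) 1, kfun (y, u))
    = ∫ u in Set.Ico (0:ℝ) 1, (Set.Iic y).indicator (fun _ => (1:ℝ)) u from by rw [← heq],
    integral_indicator_const _ measurableSet_Iic, measureReal_def, Measure.restrict_apply measurableSet_Iic,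
    vol_Iic_inter y hy0 hy1, ENNReal.toReal_ofReal hy0]
  simp

noncomputable def cl (y : ℝ) : ℝ := max 0 (min 1 (1 - y))

lemma cl_meas : Measurable cl := by unfold cl; fun_prop
lemma cl_nonneg (y : ℝ) : 0 ≤ cl y := le_max_left _ _
lemma cl_le_one (y : ℝ) : cl y ≤ 1 := max_le (by norm_num) (min_le_left _ _)
lemma cl_eq (y : ℝ) (hy : y ∈ Set.Icc (0:ℝ) 1) : cl y = 1 - y := by
  obtain ⟨h0, h1⟩ := hy
  unfold cl
  rw [min_eq_right (by linarith), max_eq_right (by linarith)]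

lemma aux_part2 {Ω : Type*} {mΩ : MeasurableSpace Ω} (μ : Measure Ω) [IsProbabilityMeasure μ]
    (Y Ytil : ℕ → Ω → ℝ) (hYmeas : ∀ n, Measurable (Y n)) (hYtilmeas : ∀ n, Measurable (Ytil n))
    (hindep' : iIndepFun Ytil μ)
    (hident' : ∀ n, IdentDistrib (Ytil n) (Y 0) μ μ)
    (hrange : ∀ᵐ ω ∂μ, Y 0 ω ∈ Set.Icc (0 : ℝ) 1)
    (hrange' : ∀ n, ∀ᵐ ω ∂μ, Ytil n ω ∈ Set.Icc (0 : ℝ) 1)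
    (a : ℝ) (ha : a = ∫ ω, Y 0 ω ∂μ) (ha0 : 0 < a) (ha1 : a ≤ 1) :
    (∫ ω, ∑' n : ℕ, ∏ j ∈ Finset.range (n + 1), (1 - Ytil j ω) ∂μ)
      = (1 - (1-a))⁻¹ * (1 - a) := by
  have hYint : Integrable (Y 0) μ := by
    refine (integrable_const (1:ℝ)).mono' (hYmeas 0).aestronglyMeasurable ?_
    filter_upwards [hrange] with ω hω
    rw [Real.norm_eq_abs, abs_le]; constructor <;> linarith [hω.1, hω.2]
  have hclY : (∫ ω, cl (Y 0 ω) ∂μ) = 1 - a := by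
    rw [show (∫ ω, cl (Y 0 ω) ∂μ) = ∫ ω, 1 - Y 0 ω ∂μ from
      integral_congr_ae (by filter_upwards [hrange] with ω hω; exact cl_eq _ hω)]
    rw [integral_sub (integrable_const 1) hYint, ha]
    simp
  set F : ℕ → Ω → ℝ := fun n ω => ∏ j ∈ Finset.range (n + 1), cl (Ytil j ω) with hF
  have hFmeas : ∀ n, Measurable (F n) := fun n =>
    Finset.measurable_prod _ (fun j _ => cl_meas.comp (hYtilmeas j))
  have hFnonneg : ∀ n ω, 0 ≤ F n ω := fun n ω =>
    Finset.prod_nonneg (fun j _ => cl_nonneg _)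
  have hFle : ∀ n ω, F n ω ≤ 1 := fun n ω =>
    Finset.prod_le_one (fun j _ => cl_nonneg _) (fun j _ => cl_le_one _)
  have hFint : ∀ n, Integrable (F n) μ := by
    intro n
    refine (integrable_const (1:ℝ)).mono' (hFmeas n).aestronglyMeasurable ?_
    filter_upwards with ω
    rw [Real.norm_eq_abs, abs_of_nonneg (hFnonneg n ω)]; exact hFle n ω
  have hFval : ∀ n, (∫ ω, F n ω ∂μ) = (1 - a) ^ (n + 1) := by
    intro n
    rw [hF]
    rw [aux_integral_prod μ Ytil hYtilmeas hindep' (fun _ => cl) (fun _ => cl_meas)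
      (fun _ x => cl_nonneg x) (n+1)]
    have : ∀ j, (∫ ω, cl (Ytil j ω) ∂μ) = 1 - a := by
      intro j
      rw [show (∫ ω, cl (Ytil j ω) ∂μ) = ∫ ω, cl (Y 0 ω) ∂μ from
        ((hident' j).comp cl_meas).integral_eq]
      exact hclY
    rw [Finset.prod_congr rfl (fun j _ => this j), Finset.prod_const, Finset.card_range]
  have key : (fun ω => ∑' n : ℕ, ∏ j ∈ Finset.range (n + 1), (1 - Ytil j ω))
      =ᵐ[μ] fun ω => ∑' n : ℕ, F n ω := by
    filter_upwards [ae_all_iff.2 hrange'] with ω hω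
    exact tsum_congr fun n => Finset.prod_congr rfl fun j _ => (cl_eq _ (hω j)).symm
  rw [integral_congr_ae key]
  have hsummable : Summable (fun n : ℕ => (1 - a) ^ (n + 1)) := by
    simp_rw [pow_succ]
    exact (summable_geometric_of_lt_one (by linarith) (by linarith)).mul_right _
  rw [integral_tsum (fun n => (hFmeas n).aestronglyMeasurable) ?_]
  · have : ∀ n : ℕ, (∫ ω, F n ω ∂μ) = (1 - a) ^ n * (1 - a) := by
      intro n; rw [hFval n, pow_succ]
    rw [tsum_congr this, tsum_mul_right,
      tsum_geometric_of_lt_one (by linarith) (by linarith)]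
  · have : ∀ n : ℕ, (∫⁻ ω, ‖F n ω‖ₑ ∂μ) = ENNReal.ofReal ((1 - a) ^ (n + 1)) := by
      intro n
      rw [← hFval n, ofReal_integral_eq_lintegral_ofReal (hFint n)
        (Filter.Eventually.of_forall (hFnonneg n))]
      refine lintegral_congr fun ω => ?_
      rw [← Real.enorm_eq_ofReal (hFnonneg n ω)]
    rw [tsum_congr this, ← ENNReal.ofReal_tsum_of_nonneg
      (fun n => pow_nonneg (by linarith) _) hsummable]
    exact ENNReal.ofReal_ne_top

noncomputable def jfun (p : ℝ × ℝ) : ℝ := if p.2 ≤ p.1 then 0 else 1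

lemma jfun_meas : Measurable jfun := by
  unfold jfun
  exact Measurable.ite (measurableSet_le measurable_snd measurable_fst) measurable_const
    measurable_const

lemma jfun_nonneg (p : ℝ × ℝ) : 0 ≤ jfun p := by unfold jfun; split <;> norm_num
lemma jfun_le_one (p : ℝ × ℝ) : jfun p ≤ 1 := by unfold jfun; split <;> norm_num

lemma inner_j (y : ℝ) (hy : y ∈ Set.Icc (0:ℝ) 1) :
    (∫ u in Set.Ico (0:ℝ) 1, jfun (y, u)) = 1 - y := by
  obtain ⟨hy0, hy1⟩ := hy
  have heq : (fun u => jfun (y, u)) = (Set.Ioi y).indicator (fun _ => (1:ℝ)) := by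
    funext u
    by_cases hu : u ≤ y
    · simp [jfun, Set.indicator, hu, not_lt.mpr hu]
    · simp [jfun, Set.indicator, hu, lt_of_not_ge hu]
  rw [show (∫ u in Set.Ico (0:ℝ) 1, jfun (y, u))
    = ∫ u in Set.Ico (0:ℝ) 1, (Set.Ioi y).indicator (fun _ => (1:ℝ)) u from by rw [← heq],
    integral_indicator_const _ measurableSet_Ioi, measureReal_def, Measure.restrict_apply measurableSet_Ioi,
    vol_Ioi_inter y hy0 hy1, ENNReal.toReal_ofReal (by linarith)]
  simp

lemma aux_part1 {Ω : Type*} {mΩ : MeasurableSpace Ω} (μ : Measure Ω) [IsProbabilityMeasure μ]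
    (Y U : ℕ → Ω → ℝ)
    (hYmeas : ∀ n, Measurable (Y n)) (hUmeas : ∀ n, Measurable (U n))
    (hindep : iIndepFun (fun n ω => (Y n ω, U n ω)) μ)
    (hident : ∀ n, IdentDistrib (fun ω => (Y n ω, U n ω)) (fun ω => (Y 0 ω, U 0 ω)) μ μ)
    (hYU : ∀ n, IndepFun (Y n) (U n) μ)
    (hU : ∀ n, μ.map (U n) = volume.restrict (Set.Ico (0 : ℝ) 1))
    (hrange : ∀ n, ∀ᵐ ω ∂μ, Y n ω ∈ Set.Icc (0 : ℝ) 1)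
    (a : ℝ) (ha : a = ∫ ω, Y 0 ω ∂μ) (ha0 : 0 < a) (ha1 : a ≤ 1)
    (r₂ : ℝ) (hr₂ : r₂ = ∫ ω, (1 - Y 0 ω) ^ 2 ∂μ) (hr₂0 : 0 ≤ r₂) (hr₂1 : r₂ < 1) :
    (∫ ω, ∏ j ∈ Finset.range (sInf {n : ℕ | U n ω ≤ Y n ω}), (1 - Y j ω) ∂μ)
      = (1 - r₂)⁻¹ * a := by
  have hpair : ∀ n, Measurable (fun ω => (Y n ω, U n ω)) :=
    fun n => (hYmeas n).prodMk (hUmeas n)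
  have hYint : Integrable (Y 0) μ := by
    refine (integrable_const (1:ℝ)).mono' (hYmeas 0).aestronglyMeasurable ?_
    filter_upwards [hrange 0] with ω hω
    rw [Real.norm_eq_abs, abs_le]; constructor <;> linarith [hω.1, hω.2]
  -- single-factor integrals
  have hH0 : (∫ ω, hfun (Y 0 ω, U 0 ω) ∂μ) = r₂ := by
    rw [aux_pair_integral μ (Y 0) (U 0) (hYmeas 0) (hUmeas 0) (hYU 0) (hU 0) (hrange 0)
      hfun hfun_meas hfun_nonneg hfun_le_one (fun y => (1 - y)^2) (by fun_prop) inner_h, hr₂]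
  have hK0 : (∫ ω, kfun (Y 0 ω, U 0 ω) ∂μ) = a := by
    rw [aux_pair_integral μ (Y 0) (U 0) (hYmeas 0) (hUmeas 0) (hYU 0) (hU 0) (hrange 0)
      kfun kfun_meas kfun_nonneg kfun_le_one (fun y => y) measurable_id inner_k, ha]
  have hJ0 : (∫ ω, jfun (Y 0 ω, U 0 ω) ∂μ) = 1 - a := by
    rw [aux_pair_integral μ (Y 0) (U 0) (hYmeas 0) (hUmeas 0) (hYU 0) (hU 0) (hrange 0)
      jfun jfun_meas jfun_nonneg jfun_le_one (fun y => 1 - y) (by fun_prop) inner_j,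
      integral_sub (integrable_const 1) hYint, ha]
    simp
  have hHj : ∀ n, (∫ ω, hfun (Y n ω, U n ω) ∂μ) = r₂ := fun n => by
    rw [show (∫ ω, hfun (Y n ω, U n ω) ∂μ) = ∫ ω, hfun (Y 0 ω, U 0 ω) ∂μ from
      ((hident n).comp hfun_meas).integral_eq, hH0]
  have hKj : ∀ n, (∫ ω, kfun (Y n ω, U n ω) ∂μ) = a := fun n => by
    rw [show (∫ ω, kfun (Y n ω, U n ω) ∂μ) = ∫ ω, kfun (Y 0 ω, U 0 ω) ∂μ from
      ((hident n).comp kfun_meas).integral_eq, hK0]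
  have hJj : ∀ n, (∫ ω, jfun (Y n ω, U n ω) ∂μ) = 1 - a := fun n => by
    rw [show (∫ ω, jfun (Y n ω, U n ω) ∂μ) = ∫ ω, jfun (Y 0 ω, U 0 ω) ∂μ from
      ((hident n).comp jfun_meas).integral_eq, hJ0]
  -- measure of rejection events
  set s : ℕ → Set Ω := fun n => {ω | ¬ (U n ω ≤ Y n ω)} with hs
  have hsmeas : ∀ n, MeasurableSet (s n) :=
    fun n => (measurableSet_le (hUmeas n) (hYmeas n)).compl
  have hμs : ∀ n, μ (s n) = ENNReal.ofReal (1 - a) := by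
    intro n
    have hind : (fun ω => jfun (Y n ω, U n ω)) = (s n).indicator (fun _ => (1:ℝ)) := by
      funext ω
      simp only [Set.indicator, Set.mem_setOf_eq, jfun, hs]
      by_cases hw : U n ω ≤ Y n ω
      · rw [if_pos hw, if_neg (fun h => h hw)]
      · rw [if_neg hw, if_pos hw]
    have : ((μ (s n)).toReal : ℝ) = 1 - a := by
      rw [← hJj n, hind, integral_indicator_const _ (hsmeas n), smul_eq_mul, mul_one, measureReal_def]
    rw [← this, ENNReal.ofReal_toReal (measure_ne_top μ _)]
  -- the no-acceptance event is null
  have hB : μ {ω | ∀ n, ¬ (U n ω ≤ Y n ω)} = 0 := by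
    have hle : ∀ m : ℕ, μ {ω | ∀ n, ¬ (U n ω ≤ Y n ω)} ≤ ENNReal.ofReal (1 - a) ^ m := by
      intro m
      have hsub : {ω | ∀ n, ¬ (U n ω ≤ Y n ω)} ⊆ ⋂ j ∈ Finset.range m, s j := by
        intro ω hω
        simp only [Set.mem_iInter]
        exact fun j _ => hω j
      calc μ {ω | ∀ n, ¬ (U n ω ≤ Y n ω)} ≤ μ (⋂ j ∈ Finset.range m, s j) :=
            measure_mono hsub
        _ = ∏ j ∈ Finset.range m, μ (s j) := by
            refine hindep.meas_biInter ?_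
            intro j _
            exact ⟨{p : ℝ × ℝ | p.2 ≤ p.1}ᶜ,
              (measurableSet_le measurable_snd measurable_fst).compl, rfl⟩
        _ = ENNReal.ofReal (1 - a) ^ m := by
            rw [Finset.prod_congr rfl (fun j _ => hμs j), Finset.prod_const,
              Finset.card_range]
    have htend : Filter.Tendsto (fun m : ℕ => ENNReal.ofReal (1 - a) ^ m)
        Filter.atTop (nhds 0) :=
      ENNReal.tendsto_pow_atTop_nhds_zero_of_lt_one (ENNReal.ofReal_lt_one.2 (by linarith))
    exact le_antisymm (ge_of_tendsto' htend hle) zero_le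
  -- the summands
  classical
  set ψ : ℕ → ℕ → ℝ × ℝ → ℝ := fun n j => if j = n then kfun else hfun with hψ
  have hψmeas : ∀ n j, Measurable (ψ n j) := by
    intro n j; by_cases hj : j = n <;> simp [hψ, hj, kfun_meas, hfun_meas]
  have hψ0 : ∀ n j p, 0 ≤ ψ n j p := by
    intro n j p; by_cases hj : j = n <;> simp [hψ, hj, kfun_nonneg p, hfun_nonneg p]
  have hψ1 : ∀ n j p, ψ n j p ≤ 1 := by
    intro n j p; by_cases hj : j = n <;> simp [hψ, hj, kfun_le_one p, hfun_le_one p]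
  set G : ℕ → Ω → ℝ := fun n ω => ∏ j ∈ Finset.range (n + 1), ψ n j (Y j ω, U j ω) with hG
  have hGmeas : ∀ n, Measurable (G n) := fun n =>
    Finset.measurable_prod _ (fun j _ => (hψmeas n j).comp (hpair j))
  have hGnonneg : ∀ n ω, 0 ≤ G n ω := fun n ω =>
    Finset.prod_nonneg (fun j _ => hψ0 n j _)
  have hGle : ∀ n ω, G n ω ≤ 1 := fun n ω =>
    Finset.prod_le_one (fun j _ => hψ0 n j _) (fun j _ => hψ1 n j _)
  have hGint : ∀ n, Integrable (G n) μ := by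
    intro n
    refine (integrable_const (1:ℝ)).mono' (hGmeas n).aestronglyMeasurable ?_
    filter_upwards with ω
    rw [Real.norm_eq_abs, abs_of_nonneg (hGnonneg n ω)]; exact hGle n ω
  have hGval : ∀ n, (∫ ω, G n ω ∂μ) = r₂ ^ n * a := by
    intro n
    rw [hG]
    rw [aux_integral_prod μ (fun k ω => (Y k ω, U k ω)) hpair hindep (ψ n) (hψmeas n)
      (hψ0 n) (n + 1), Finset.prod_range_succ]
    have h1 : ∀ j ∈ Finset.range n, (∫ ω, ψ n j (Y j ω, U j ω) ∂μ) = r₂ := by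
      intro j hj
      rw [show ψ n j = hfun from by
        simp [hψ, Nat.ne_of_lt (Finset.mem_range.1 hj)]]
      exact hHj j
    rw [Finset.prod_congr rfl h1, Finset.prod_const, Finset.card_range,
      show ψ n n = kfun from by simp [hψ], hKj n]
  -- a.e. identification of the integrand with the series
  have hae : (fun ω => ∏ j ∈ Finset.range (sInf {n : ℕ | U n ω ≤ Y n ω}), (1 - Y j ω))
      =ᵐ[μ] fun ω => ∑' n : ℕ, G n ω := by
    have h2 : ∀ᵐ ω ∂μ, ∃ n, U n ω ≤ Y n ω := by
      have := measure_eq_zero_iff_ae_notMem.mp hB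
      filter_upwards [this] with ω hω
      by_contra hcon
      push_neg at hcon
      exact hω (fun n => not_le.2 (hcon n))
    filter_upwards [ae_all_iff.2 hrange, h2] with ω hω1 hω2
    have hne : {n : ℕ | U n ω ≤ Y n ω}.Nonempty := hω2
    set n₀ := sInf {n : ℕ | U n ω ≤ Y n ω} with hn₀
    have hmem : U n₀ ω ≤ Y n₀ ω := Nat.sInf_mem hne
    have hmin : ∀ m, m < n₀ → ¬ (U m ω ≤ Y m ω) := fun m hm => Nat.notMem_of_lt_sInf hm
    symm
    rw [tsum_eq_single n₀ ?_]
    · show (∏ j ∈ Finset.range (n₀ + 1), ψ n₀ j (Y j ω, U j ω))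
          = ∏ j ∈ Finset.range n₀, (1 - Y j ω)
      rw [Finset.prod_range_succ,
        show ψ n₀ n₀ = kfun from by simp [hψ], show kfun (Y n₀ ω, U n₀ ω) = 1 from by
          simp [kfun, hmem], mul_one]
      refine Finset.prod_congr rfl ?_
      intro j hj
      have hjlt : j < n₀ := Finset.mem_range.1 hj
      rw [show ψ n₀ j = hfun from by simp [hψ, Nat.ne_of_lt hjlt]]
      have : hfun (Y j ω, U j ω) = cl (Y j ω) := by
        simp [hfun, cl, hmin j hjlt]
      rw [this, cl_eq _ (hω1 j)]
    · intro b hb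
      rcases lt_or_gt_of_ne hb with hlt | hgt
      · refine Finset.prod_eq_zero (Finset.self_mem_range_succ b) ?_
        rw [show ψ b b = kfun from by simp [hψ]]
        simp [kfun, hmin b hlt]
      · refine Finset.prod_eq_zero (Finset.mem_range.2 (lt_trans hgt (Nat.lt_succ_self b))) ?_
        rw [show ψ b n₀ = hfun from by simp [hψ, Nat.ne_of_lt hgt]]
        simp [hfun, hmem]
  rw [integral_congr_ae hae]
  have hsummable : Summable (fun n : ℕ => r₂ ^ n * a) :=
    (summable_geometric_of_lt_one hr₂0 hr₂1).mul_right _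
  rw [integral_tsum (fun n => (hGmeas n).aestronglyMeasurable) ?_]
  · rw [tsum_congr hGval, tsum_mul_right, tsum_geometric_of_lt_one hr₂0 hr₂1]
  · have : ∀ n : ℕ, (∫⁻ ω, ‖G n ω‖ₑ ∂μ) = ENNReal.ofReal (r₂ ^ n * a) := by
      intro n
      rw [← hGval n, ofReal_integral_eq_lintegral_ofReal (hGint n)
        (Filter.Eventually.of_forall (hGnonneg n))]
      refine lintegral_congr fun ω => ?_
      rw [← Real.enorm_eq_ofReal (hGnonneg n ω)]
    rw [tsum_congr this, ← ENNReal.ofReal_tsum_of_nonneg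
      (fun n => mul_nonneg (pow_nonneg hr₂0 _) (le_of_lt ha0)) hsummable]
    exact ENNReal.ofReal_ne_top

/-- Bias of the truncated vanilla holding-time estimator: in the accept/reject model with
i.i.d. acceptance probabilities `Y n ∈ [0,1]`, mean `a ∈ (0,1]`, `r₂ = E[(1-Y₁)²] < 1`,
first-success time `T`, and an independent i.i.d. copy `(Ỹ n)`,
`E[∏_{j=1}^{T-1} (1-Y j)] · E[∑ₙ ∏_{j=1}^n (1-Ỹ j)] = (1-a)/(1-r₂)`. -/
theorem truncated_vanilla_bias
    {Ω : Type*} {mΩ : MeasurableSpace Ω} (μ : Measure Ω) [IsProbabilityMeasure μ]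
    (Y U Ytil : ℕ → Ω → ℝ)
    (hYmeas : ∀ n, Measurable (Y n)) (hUmeas : ∀ n, Measurable (U n))
    (hYtilmeas : ∀ n, Measurable (Ytil n))
    (hindep : iIndepFun (fun n ω => (Y n ω, U n ω)) μ)
    (hident : ∀ n, IdentDistrib (fun ω => (Y n ω, U n ω)) (fun ω => (Y 0 ω, U 0 ω)) μ μ)
    (hYU : ∀ n, IndepFun (Y n) (U n) μ)
    (hU : ∀ n, μ.map (U n) = volume.restrict (Set.Ico (0 : ℝ) 1))
    (hindep' : iIndepFun Ytil μ)
    (hident' : ∀ n, IdentDistrib (Ytil n) (Y 0) μ μ)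
    (hindepYYtil : IndepFun (fun ω => fun n : ℕ => (Y n ω, U n ω))
      (fun ω => fun n : ℕ => Ytil n ω) μ)
    (hrange : ∀ n, ∀ᵐ ω ∂μ, Y n ω ∈ Set.Icc (0 : ℝ) 1)
    (hrange' : ∀ n, ∀ᵐ ω ∂μ, Ytil n ω ∈ Set.Icc (0 : ℝ) 1)
    (a : ℝ) (ha : a = ∫ ω, Y 0 ω ∂μ) (ha0 : 0 < a) (ha1 : a ≤ 1)
    (r₂ : ℝ) (hr₂ : r₂ = ∫ ω, (1 - Y 0 ω) ^ 2 ∂μ) (hr₂1 : r₂ < 1) :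
    (∫ ω, ∏ j ∈ Finset.range (sInf {n : ℕ | U n ω ≤ Y n ω}), (1 - Y j ω) ∂μ)
      * (∫ ω, ∑' n : ℕ, ∏ j ∈ Finset.range (n + 1), (1 - Ytil j ω) ∂μ)
      = (1 - a) / (1 - r₂) := by
  have hr₂0 : 0 ≤ r₂ := hr₂ ▸ integral_nonneg (fun ω => sq_nonneg _)
  rw [aux_part1 μ Y U hYmeas hUmeas hindep hident hYU hU hrange a ha ha0 ha1 r₂ hr₂ hr₂0 hr₂1,
    aux_part2 μ Y Ytil hYmeas hYtilmeas hindep' hident' (hrange 0) hrange' a ha ha0 ha1,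
    show (1:ℝ) - (1 - a) = a from by ring]
  have hra : (1:ℝ) - r₂ ≠ 0 := by linarith
  have haa : a ≠ 0 := ne_of_gt ha0
  field_simp
end

section
/- Let P be a Markov kernel on a measurable space E and μ a probability measure on E. Define the measure μ_aug on E × E by μ_aug(A₁ × A₂) := ∫_{A₁} μ(dx) P(x, A₂). If μ is invariant for the Markov kernel K_aug given by K_aug((x,y), ·) := (1-α(x,y)) δ_x ⊗ P + α(x,y) δ_y ⊗ P, where α is a measurable function E × E → [0,1] such that the Metropolis–Hastings kernel K_MH with proposal P and acceptance α has invariant measure μ, then μ_aug is invariant for K_aug. -/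
open MeasureTheory ProbabilityTheory
open scoped ENNReal

/-- If `μ` is invariant for the Metropolis–Hastings kernel with proposal kernel `P` and
acceptance function `α`, then the augmented measure `μ_aug = μ ⊗ₘ P` on `E × E` is invariant
for the augmented kernel `K_aug((x,y), ·) = (1-α(x,y)) δ_x ⊗ P + α(x,y) δ_y ⊗ P`. -/
theorem augmented_chain_invariant
    {E : Type*} [MeasurableSpace E]
    (P : Kernel E E) [IsMarkovKernel P]
    (μ : Measure E) [IsProbabilityMeasure μ]
    (α : E × E → ℝ) (hαmeas : Measurable α) (hα0 : ∀ z, 0 ≤ α z) (hα1 : ∀ z, α z ≤ 1)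
    (hMH : μ.bind (fun x =>
        ((P x).withDensity (fun y => ENNReal.ofReal (α (x, y))))
          + (1 - ∫⁻ y, ENNReal.ofReal (α (x, y)) ∂(P x)) • Measure.dirac x) = μ) :
    (μ ⊗ₘ P).bind (fun z =>
        ENNReal.ofReal (1 - α z) • ((Measure.dirac z.1) ⊗ₘ P)
          + ENNReal.ofReal (α z) • ((Measure.dirac z.2) ⊗ₘ P)) = μ ⊗ₘ P := by
  classical
  have hαm' : Measurable fun z : E × E => ENNReal.ofReal (α z) := hαmeas.ennreal_ofReal
  have hα1m : Measurable fun z : E × E => ENNReal.ofReal (1 - α z) :=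
    (measurable_const.sub hαmeas).ennreal_ofReal
  set abar : E → ℝ≥0∞ := fun x => ∫⁻ y, ENNReal.ofReal (α (x, y)) ∂(P x) with habar
  have habarm : Measurable abar :=
    Measurable.lintegral_kernel_prod_right (κ := P) hαm'
  have hαle1 : ∀ z : E × E, ENNReal.ofReal (α z) ≤ 1 := fun z => by
    simpa using ENNReal.ofReal_le_one.2 (hα1 z)
  have habar_le : ∀ x, abar x ≤ 1 := fun x => by
    calc abar x ≤ ∫⁻ _, 1 ∂(P x) := lintegral_mono fun y => hαle1 (x, y)
      _ = 1 := by simp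
  -- the MH kernel
  set K : E → Measure E := fun x =>
    ((P x).withDensity (fun y => ENNReal.ofReal (α (x, y))))
      + (1 - abar x) • Measure.dirac x with hK
  have hKm : Measurable K := by
    apply Measure.measurable_of_measurable_coe
    intro t ht
    have : ∀ x, K x t
        = (∫⁻ y, t.indicator (fun y => ENNReal.ofReal (α (x, y))) y ∂(P x))
          + (1 - abar x) * t.indicator 1 x := by
      intro x
      rw [hK]
      simp only [Measure.add_apply, Measure.smul_apply, smul_eq_mul,
        withDensity_apply _ ht, Measure.dirac_apply' _ ht]
      rw [← lintegral_indicator ht]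
    simp only [this]
    refine Measurable.add ?_ (((measurable_const.sub habarm)).mul
      (measurable_one.indicator ht))
    refine Measurable.lintegral_kernel_prod_right (κ := P) ?_
    exact hαm'.indicator (ht.preimage measurable_snd)
  ext S hS
  set φ : E → ℝ≥0∞ := fun w => P w (Prod.mk w ⁻¹' S) with hφdef
  have hφm : Measurable φ := Kernel.measurable_kernel_prodMk_left hS
  have hφ_le : ∀ w, φ w ≤ 1 := fun w => prob_le_one
  have hdirac : ∀ (t : Set (E × E)), MeasurableSet t → ∀ w,
      (Measure.dirac w ⊗ₘ P) t = P w (Prod.mk w ⁻¹' t) := by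
    intro t ht w
    rw [Measure.compProd_apply ht,
      lintegral_dirac' _ (Kernel.measurable_kernel_prodMk_left ht)]
  -- measurability of the augmented kernel
  have hgm : Measurable (fun z : E × E =>
      ENNReal.ofReal (1 - α z) • ((Measure.dirac z.1) ⊗ₘ P)
        + ENNReal.ofReal (α z) • ((Measure.dirac z.2) ⊗ₘ P)) := by
    apply Measure.measurable_of_measurable_coe
    intro t ht
    simp only [Measure.add_apply, Measure.smul_apply, smul_eq_mul, hdirac t ht]
    exact (hα1m.mul ((Kernel.measurable_kernel_prodMk_left ht).comp measurable_fst)).add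
      (hαm'.mul ((Kernel.measurable_kernel_prodMk_left ht).comp measurable_snd))
  rw [Measure.bind_apply hS hgm.aemeasurable]
  have hstep1 : (∫⁻ z, (ENNReal.ofReal (1 - α z) • ((Measure.dirac z.1) ⊗ₘ P)
        + ENNReal.ofReal (α z) • ((Measure.dirac z.2) ⊗ₘ P)) S ∂(μ ⊗ₘ P))
      = ∫⁻ z : E × E, ENNReal.ofReal (1 - α z) * φ z.1
          + ENNReal.ofReal (α z) * φ z.2 ∂(μ ⊗ₘ P) := by
    refine lintegral_congr fun z => ?_
    simp only [Measure.add_apply, Measure.smul_apply, smul_eq_mul, hdirac S hS]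
    rfl
  rw [hstep1]
  have hfm : Measurable fun z : E × E => ENNReal.ofReal (1 - α z) * φ z.1
      + ENNReal.ofReal (α z) * φ z.2 :=
    (hα1m.mul (hφm.comp measurable_fst)).add (hαm'.mul (hφm.comp measurable_snd))
  rw [Measure.lintegral_compProd hfm]
  -- compute the inner integral
  have hinner : ∀ x, (∫⁻ y, ENNReal.ofReal (1 - α (x, y)) * φ x
        + ENNReal.ofReal (α (x, y)) * φ y ∂(P x))
      = (1 - abar x) * φ x + ∫⁻ y, ENNReal.ofReal (α (x, y)) * φ y ∂(P x) := by
    intro x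
    have hax : Measurable fun y => ENNReal.ofReal (α (x, y)) :=
      hαm'.comp measurable_prodMk_left
    have h1ax : Measurable fun y => ENNReal.ofReal (1 - α (x, y)) :=
      hα1m.comp measurable_prodMk_left
    have hm1 : Measurable fun y => ENNReal.ofReal (1 - α (x, y)) * φ x :=
      h1ax.mul measurable_const
    rw [lintegral_add_left hm1]
    congr 1
    rw [lintegral_mul_const _ h1ax]
    congr 1
    have hsub : ∀ y, ENNReal.ofReal (1 - α (x, y)) = 1 - ENNReal.ofReal (α (x, y)) := by
      intro y
      rw [ENNReal.ofReal_sub _ (hα0 (x, y)), ENNReal.ofReal_one]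
    simp only [hsub]
    rw [lintegral_sub hax
      (lt_of_le_of_lt (habar_le x) ENNReal.one_lt_top).ne
      (Filter.Eventually.of_forall fun y => hαle1 (x, y))]
    simp [habar]
  simp only [hinner]
  -- compute the RHS and use invariance
  rw [Measure.compProd_apply hS]
  conv_rhs => rw [← hMH]
  rw [Measure.lintegral_bind hKm.aemeasurable hφm.aemeasurable]
  refine lintegral_congr fun x => ?_
  have hax : Measurable fun y => ENNReal.ofReal (α (x, y)) :=
    hαm'.comp measurable_prodMk_left
  have : (∫⁻ w, φ w ∂(K x))
      = (∫⁻ y, ENNReal.ofReal (α (x, y)) * φ y ∂(P x)) + (1 - abar x) * φ x := by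
    rw [hK]
    simp only [lintegral_add_measure, lintegral_smul_measure]
    rw [lintegral_withDensity_eq_lintegral_mul _ hax hφm, lintegral_dirac' _ hφm]
    simp only [Pi.mul_apply, smul_eq_mul]
  rw [this]
  ring
end
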